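/- arXiv:2503.13993 — 2 statements merged into one kernel-verified Lean document; each statement's English description precedes it below -/
import Mathlib

section
/- There exists a constant C₂ > 1 such that for every integer k ≥ 2 and every real x ≥ 1, Σ_{d > x} μ²(d) τ_k(d) / d² ≤ C₂^k · (2k - 2 + log x)^{k-1} / x. -/
open ArithmeticFunction

/-- The `k`-th divisor function: the number of ways to write `n` as an ordered
product of `k` positive integers (the `k`-fold Dirichlet convolution of `ζ`). -/
def tauk (k n : ℕ) : ℕ := (zeta ^ k : ArithmeticFunction ℕ) n

open Finset

lemma tail_sq_aux (m : ℕ) (hm : 1 ≤ m) (N : ℕ) :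
    ∑ b ∈ Finset.Ioc m N, (1 : ℝ) / (b : ℝ) ^ 2 ≤ 1 / (m : ℝ) := by
  have hm' : (0:ℝ) < (m:ℝ) := by exact_mod_cast hm
  rcases le_or_gt N m with h | h
  · rw [Finset.Ioc_eq_empty (by omega)]
    simpa using (by positivity : (0:ℝ) ≤ 1 / (m:ℝ))
  · have key : ∀ n, m ≤ n → ∑ b ∈ Finset.Ioc m n, (1 : ℝ) / (b : ℝ) ^ 2
        ≤ 1 / (m : ℝ) - 1 / (n : ℝ) := by
      intro n hn
      induction n, hn using Nat.le_induction with
      | base => simp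
      | succ n hn ih =>
        rw [Finset.sum_Ioc_succ_top (by omega)]
        have hn1 : (1:ℝ) ≤ (n:ℝ) := by exact_mod_cast le_trans hm hn
        have h1 : (1:ℝ) / ((n:ℝ)+1) ^ 2 ≤ 1 / (n:ℝ) - 1 / ((n:ℝ)+1) := by
          have he : 1 / (n:ℝ) - 1 / ((n:ℝ)+1) = 1 / ((n:ℝ) * ((n:ℝ)+1)) := by
            field_simp
            ring
          rw [he]
          apply one_div_le_one_div_of_le (by positivity)
          nlinarith
        push_cast
        linarith
    have hN : (0:ℝ) < (N:ℝ) := by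
      have : 0 < N := by omega
      exact_mod_cast this
    have h2 : (0:ℝ) ≤ 1 / (N:ℝ) := by positivity
    linarith [key N h.le]

lemma tail_filter (x : ℝ) (hx : 1 ≤ x) (N : ℕ) :
    ∑ b ∈ (Finset.range (N+1)).filter (fun b : ℕ => x < (b : ℝ)), (1 : ℝ) / (b : ℝ) ^ 2
      ≤ 2 / x := by
  have hx0 : (0:ℝ) < x := by linarith
  have hm : 1 ≤ ⌊x⌋₊ := Nat.le_floor (by exact_mod_cast hx)
  have hm' : (0:ℝ) < (⌊x⌋₊ : ℝ) := by exact_mod_cast hm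
  have hsub : (Finset.range (N+1)).filter (fun b : ℕ => x < (b : ℝ)) ⊆ Finset.Ioc ⌊x⌋₊ N := by
    intro b hb
    simp only [Finset.mem_filter, Finset.mem_range] at hb
    simp only [Finset.mem_Ioc]
    exact ⟨(Nat.floor_lt hx0.le).mpr hb.2, by omega⟩
  calc ∑ b ∈ (Finset.range (N+1)).filter (fun b : ℕ => x < (b : ℝ)), (1 : ℝ) / (b : ℝ) ^ 2
      ≤ ∑ b ∈ Finset.Ioc ⌊x⌋₊ N, (1 : ℝ) / (b : ℝ) ^ 2 :=
        Finset.sum_le_sum_of_subset_of_nonneg hsub (fun i _ _ => by positivity)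
    _ ≤ 1 / (⌊x⌋₊ : ℝ) := tail_sq_aux _ hm N
    _ ≤ 2 / x := by
        rw [div_le_div_iff₀ hm' hx0]
        have := Nat.lt_floor_add_one x
        have h1 : (1:ℝ) ≤ (⌊x⌋₊:ℝ) := by exact_mod_cast hm
        nlinarith

lemma sum_sq_le_two (N : ℕ) : ∑ b ∈ Finset.Ioc 0 N, (1 : ℝ) / (b : ℝ) ^ 2 ≤ 2 := by
  have hsub : Finset.Ioc 0 N ⊆ insert 1 (Finset.Ioc 1 N) := by
    intro b hb
    simp only [Finset.mem_Ioc] at hb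
    simp only [Finset.mem_insert, Finset.mem_Ioc]
    omega
  calc ∑ b ∈ Finset.Ioc 0 N, (1 : ℝ) / (b : ℝ) ^ 2
      ≤ ∑ b ∈ insert 1 (Finset.Ioc 1 N), (1 : ℝ) / (b : ℝ) ^ 2 :=
        Finset.sum_le_sum_of_subset_of_nonneg hsub (fun i _ _ => by positivity)
    _ = 1 + ∑ b ∈ Finset.Ioc 1 N, (1 : ℝ) / (b : ℝ) ^ 2 := by
        rw [Finset.sum_insert (by simp)]; norm_num
    _ ≤ 1 + 1 := by
        have h := tail_sq_aux 1 le_rfl N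
        norm_num at h ⊢
        linarith
    _ = 2 := by norm_num

lemma sum_inv_le (x : ℝ) (hx : 1 ≤ x) :
    ∑ b ∈ Finset.Icc 1 ⌊x⌋₊, (1 : ℝ) / (b : ℝ) ≤ 1 + Real.log x := by
  have hm : 1 ≤ ⌊x⌋₊ := Nat.le_floor (by exact_mod_cast hx)
  have h1 : ∑ b ∈ Finset.Icc 1 ⌊x⌋₊, (1 : ℝ) / (b : ℝ) = ((harmonic ⌊x⌋₊ : ℚ) : ℝ) := by
    rw [harmonic_eq_sum_Icc]
    push_cast
    simp [one_div]
  rw [h1]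
  refine (harmonic_le_one_add_log _).trans ?_
  have hfl : (⌊x⌋₊ : ℝ) ≤ x := Nat.floor_le (by linarith)
  have : Real.log (⌊x⌋₊ : ℝ) ≤ Real.log x :=
    Real.log_le_log (by exact_mod_cast hm) hfl
  linarith

lemma sum_antidiag (D : Finset ℕ) (f : ℕ × ℕ → ℝ) :
    ∑ d ∈ D, ∑ p ∈ d.divisorsAntidiagonal, f p
      = ∑ p ∈ D.biUnion Nat.divisorsAntidiagonal, f p := by
  refine (Finset.sum_biUnion ?_).symm
  intro a _ b _ hab
  refine Finset.disjoint_left.mpr fun p hpa hpb => hab ?_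
  rw [← (Nat.mem_divisorsAntidiagonal.mp hpa).1, (Nat.mem_divisorsAntidiagonal.mp hpb).1]

lemma tauk_succ_eq (k d : ℕ) (hd : d ≠ 0) :
    (tauk (k+1) d : ℝ) = ∑ p ∈ d.divisorsAntidiagonal, (tauk k p.1 : ℝ) := by
  rw [tauk, pow_succ, ArithmeticFunction.mul_apply]
  push_cast
  refine Finset.sum_congr rfl fun p hp => ?_
  rw [ArithmeticFunction.zeta_apply_ne (Nat.right_ne_zero_of_mem_divisorsAntidiagonal hp)]
  simp [tauk]

lemma T_bound (k : ℕ) : ∀ x : ℝ, 1 ≤ x →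
    ∑ a ∈ Finset.Icc 1 ⌊x⌋₊, (tauk k a : ℝ) / (a : ℝ) ≤ (1 + Real.log x) ^ k := by
  induction k with
  | zero =>
    intro x hx
    have hm : 1 ≤ ⌊x⌋₊ := Nat.le_floor (by exact_mod_cast hx)
    have h : ∑ a ∈ Finset.Icc 1 ⌊x⌋₊, (tauk 0 a : ℝ) / (a : ℝ)
        = ∑ a ∈ Finset.Icc 1 ⌊x⌋₊, if a = 1 then (1:ℝ) else 0 := by
      refine Finset.sum_congr rfl fun a _ => ?_
      rw [tauk, pow_zero, ArithmeticFunction.one_apply]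
      split_ifs with hh <;> simp [hh]
    rw [h, Finset.sum_ite_eq' (Finset.Icc 1 ⌊x⌋₊) 1 (fun _ => (1:ℝ))]
    simp [hm]
  | succ k ih =>
    intro x hx
    have hx0 : (0:ℝ) < x := by linarith
    have hlog : 0 ≤ Real.log x := Real.log_nonneg hx
    set M := ⌊x⌋₊ with hM
    have hm : 1 ≤ M := Nat.le_floor (by exact_mod_cast hx)
    have hcalc : ∑ a ∈ Finset.Icc 1 M, (tauk (k+1) a : ℝ) / (a : ℝ)
        = ∑ p ∈ (Finset.Icc 1 M).biUnion Nat.divisorsAntidiagonal,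
            (tauk k p.1 : ℝ) / ((p.1 : ℝ) * (p.2 : ℝ)) := by
      rw [← sum_antidiag]
      refine Finset.sum_congr rfl fun a ha => ?_
      simp only [Finset.mem_Icc] at ha
      rw [tauk_succ_eq k a (by omega), Finset.sum_div]
      refine Finset.sum_congr rfl fun p hp => ?_
      have h1 : p.1 * p.2 = a := (Nat.mem_divisorsAntidiagonal.mp hp).1
      have h2 : ((p.1 : ℝ) * (p.2 : ℝ)) = (a : ℝ) := by exact_mod_cast congrArg Nat.cast h1
      rw [h2]
    rw [hcalc]
    have hsub : (Finset.Icc 1 M).biUnion Nat.divisorsAntidiagonal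
        ⊆ Finset.Icc 1 M ×ˢ Finset.Icc 1 M := by
      intro p hp
      rcases Finset.mem_biUnion.mp hp with ⟨d, hd, hpd⟩
      have h1 : p.1 * p.2 = d := (Nat.mem_divisorsAntidiagonal.mp hpd).1
      have h2 := Nat.ne_zero_of_mem_divisorsAntidiagonal hpd
      simp only [Finset.mem_Icc] at hd
      simp only [Finset.mem_product, Finset.mem_Icc]
      have hp1 : 0 < p.1 := by
        rcases Nat.eq_zero_or_pos p.1 with h | h
        · exfalso; rw [h] at h1; simp at h1; omega
        · exact h
      have hp2 : 0 < p.2 := by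
        rcases Nat.eq_zero_or_pos p.2 with h | h
        · exfalso; rw [h] at h1; simp at h1; omega
        · exact h
      refine ⟨⟨hp1, ?_⟩, hp2, ?_⟩
      · calc p.1 ≤ p.1 * p.2 := Nat.le_mul_of_pos_right _ hp2
          _ ≤ M := by omega
      · calc p.2 ≤ p.1 * p.2 := Nat.le_mul_of_pos_left _ hp1
          _ ≤ M := by omega
    calc ∑ p ∈ (Finset.Icc 1 M).biUnion Nat.divisorsAntidiagonal,
            (tauk k p.1 : ℝ) / ((p.1 : ℝ) * (p.2 : ℝ))
        ≤ ∑ p ∈ Finset.Icc 1 M ×ˢ Finset.Icc 1 M,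
            (tauk k p.1 : ℝ) / ((p.1 : ℝ) * (p.2 : ℝ)) :=
          Finset.sum_le_sum_of_subset_of_nonneg hsub (fun p _ _ => by positivity)
      _ = (∑ a ∈ Finset.Icc 1 M, (tauk k a : ℝ) / (a : ℝ))
            * (∑ b ∈ Finset.Icc 1 M, (1 : ℝ) / (b : ℝ)) := by
          rw [Finset.sum_mul_sum, Finset.sum_product]
          refine Finset.sum_congr rfl fun a _ => Finset.sum_congr rfl fun b _ => ?_
          rw [div_mul_div_comm, mul_one]
      _ ≤ (1 + Real.log x) ^ k * (1 + Real.log x) := by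
          refine mul_le_mul (ih x hx) (sum_inv_le x hx) ?_ (by positivity)
          exact Finset.sum_nonneg fun b _ => by positivity
      _ = (1 + Real.log x) ^ (k+1) := (pow_succ _ _).symm

lemma main_bound : ∀ k, 1 ≤ k → ∀ x : ℝ, 1 ≤ x → ∀ N : ℕ,
    ∑ d ∈ (Finset.range (N+1)).filter (fun d : ℕ => x < (d : ℝ)),
        (tauk k d : ℝ) / (d : ℝ) ^ 2
      ≤ 4 ^ k * (1 + Real.log x) ^ (k - 1) / x := by
  intro k hk
  induction k, hk using Nat.le_induction with
  | base =>
    intro x hx N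
    have hx0 : (0:ℝ) < x := by linarith
    have h1 : ∑ d ∈ (Finset.range (N+1)).filter (fun d : ℕ => x < (d : ℝ)),
        (tauk 1 d : ℝ) / (d : ℝ) ^ 2
        = ∑ d ∈ (Finset.range (N+1)).filter (fun d : ℕ => x < (d : ℝ)),
            (1 : ℝ) / (d : ℝ) ^ 2 := by
      refine Finset.sum_congr rfl fun d hd => ?_
      simp only [Finset.mem_filter] at hd
      have hd0 : d ≠ 0 := by
        rintro rfl
        simp at hd
        linarith
      rw [tauk, pow_one, ArithmeticFunction.zeta_apply_ne hd0, Nat.cast_one]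
    rw [h1]
    have h2 : (4:ℝ) ^ 1 * (1 + Real.log x) ^ (1 - 1) / x = 4 / x := by norm_num
    rw [h2]
    refine (tail_filter x hx N).trans ?_
    gcongr
    norm_num
  | succ k hk ih =>
    intro x hx N
    have hx0 : (0:ℝ) < x := by linarith
    have hlog : 0 ≤ Real.log x := Real.log_nonneg hx
    set D := (Finset.range (N+1)).filter (fun d : ℕ => x < (d : ℝ)) with hD
    have hDmem : ∀ d ∈ D, d ≠ 0 ∧ x < (d:ℝ) ∧ d ≤ N := by
      intro d hd
      simp only [hD, Finset.mem_filter, Finset.mem_range] at hd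
      refine ⟨?_, hd.2, by omega⟩
      rintro rfl
      have := hd.2
      simp at this
      linarith
    set g : ℕ × ℕ → ℝ := fun p => (tauk k p.1 : ℝ) / ((p.1 : ℝ) * (p.2 : ℝ)) ^ 2 with hg
    have hgnonneg : ∀ p : ℕ × ℕ, 0 ≤ g p := fun p => by
      rw [hg]; positivity
    have hcalc : ∑ d ∈ D, (tauk (k+1) d : ℝ) / (d : ℝ) ^ 2
        = ∑ p ∈ D.biUnion Nat.divisorsAntidiagonal, g p := by
      rw [← sum_antidiag]
      refine Finset.sum_congr rfl fun d hd => ?_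
      rw [tauk_succ_eq k d (hDmem d hd).1, Finset.sum_div]
      refine Finset.sum_congr rfl fun p hp => ?_
      have h1 : p.1 * p.2 = d := (Nat.mem_divisorsAntidiagonal.mp hp).1
      have h2 : ((p.1 : ℝ) * (p.2 : ℝ)) = (d : ℝ) := by exact_mod_cast congrArg Nat.cast h1
      rw [hg]
      simp only
      rw [h2]
    rw [hcalc]
    set B := D.biUnion Nat.divisorsAntidiagonal with hB
    have hBmem : ∀ p ∈ B, 0 < p.1 ∧ 0 < p.2 ∧ p.1 * p.2 ≤ N ∧ x < ((p.1:ℝ) * (p.2:ℝ)) := by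
      intro p hp
      rcases Finset.mem_biUnion.mp hp with ⟨d, hd, hpd⟩
      have h1 : p.1 * p.2 = d := (Nat.mem_divisorsAntidiagonal.mp hpd).1
      obtain ⟨hd0, hdx, hdN⟩ := hDmem d hd
      have hp1 : 0 < p.1 := by
        rcases Nat.eq_zero_or_pos p.1 with h | h
        · exfalso; rw [h] at h1; simp at h1; omega
        · exact h
      have hp2 : 0 < p.2 := by
        rcases Nat.eq_zero_or_pos p.2 with h | h
        · exfalso; rw [h] at h1; simp at h1; omega
        · exact h
      have h2 : ((p.1 : ℝ) * (p.2 : ℝ)) = (d : ℝ) := by exact_mod_cast congrArg Nat.cast h1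
      exact ⟨hp1, hp2, by omega, by rw [h2]; exact hdx⟩
    rw [← Finset.sum_filter_add_sum_filter_not B (fun p => (p.1 : ℝ) ≤ x) g]
    have part1 : ∑ p ∈ B.filter (fun p => (p.1:ℝ) ≤ x), g p
        ≤ 2 * (1 + Real.log x) ^ k / x := by
      have hsub1 : B.filter (fun p => (p.1:ℝ) ≤ x)
          ⊆ Finset.Icc 1 ⌊x⌋₊ ×ˢ Finset.range (N+1) := by
        intro p hp
        simp only [Finset.mem_filter] at hp
        obtain ⟨h1, h2, h3, h4⟩ := hBmem p hp.1
        simp only [Finset.mem_product, Finset.mem_Icc, Finset.mem_range]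
        refine ⟨⟨h1, Nat.le_floor hp.2⟩, ?_⟩
        have : p.2 ≤ p.1 * p.2 := Nat.le_mul_of_pos_left _ h1
        omega
      have he : ∑ p ∈ B.filter (fun p => (p.1:ℝ) ≤ x), g p
          = ∑ p ∈ B.filter (fun p => (p.1:ℝ) ≤ x),
              (if x < (p.1:ℝ)*(p.2:ℝ) then g p else 0) := by
        refine Finset.sum_congr rfl fun p hp => ?_
        simp only [Finset.mem_filter] at hp
        rw [if_pos (hBmem p hp.1).2.2.2]
      rw [he]
      calc ∑ p ∈ B.filter (fun p => (p.1:ℝ) ≤ x),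
              (if x < (p.1:ℝ)*(p.2:ℝ) then g p else 0)
          ≤ ∑ p ∈ Finset.Icc 1 ⌊x⌋₊ ×ˢ Finset.range (N+1),
              (if x < (p.1:ℝ)*(p.2:ℝ) then g p else 0) := by
            refine Finset.sum_le_sum_of_subset_of_nonneg hsub1 (fun p _ _ => ?_)
            split_ifs
            · exact hgnonneg p
            · exact le_rfl
        _ = ∑ a ∈ Finset.Icc 1 ⌊x⌋₊, ∑ b ∈ Finset.range (N+1),
              (if x < (a:ℝ)*(b:ℝ) then g (a,b) else 0) := by rw [Finset.sum_product]
        _ ≤ ∑ a ∈ Finset.Icc 1 ⌊x⌋₊, (2 / x) * ((tauk k a : ℝ) / (a:ℝ)) := by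
            refine Finset.sum_le_sum fun a ha => ?_
            simp only [Finset.mem_Icc] at ha
            have ha0 : (0:ℝ) < (a:ℝ) := by exact_mod_cast ha.1
            have hax : (a:ℝ) ≤ x :=
              le_trans (by exact_mod_cast Nat.cast_le.mpr ha.2) (Nat.floor_le hx0.le)
            have hxa1 : 1 ≤ x / (a:ℝ) := (one_le_div ha0).mpr hax
            have hinner : ∀ b ∈ Finset.range (N+1),
                (if x < (a:ℝ)*(b:ℝ) then g (a,b) else 0)
                = ((tauk k a : ℝ)/(a:ℝ)^2)
                    * (if x/(a:ℝ) < (b:ℝ) then (1:ℝ)/(b:ℝ)^2 else 0) := by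
              intro b _
              by_cases h : x/(a:ℝ) < (b:ℝ)
              · rw [if_pos (by rw [mul_comm]; exact (div_lt_iff₀ ha0).mp h), if_pos h, hg]
                simp only
                rw [mul_pow, div_mul_div_comm, mul_one]
              · rw [if_neg (fun hc => h (by rw [div_lt_iff₀ ha0, mul_comm]; exact hc)),
                  if_neg h, mul_zero]
            rw [Finset.sum_congr rfl hinner, ← Finset.mul_sum]
            have hin : ∑ b ∈ Finset.range (N+1),
                (if x/(a:ℝ) < (b:ℝ) then (1:ℝ)/(b:ℝ)^2 else 0) ≤ 2 / (x/(a:ℝ)) := by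
              rw [← Finset.sum_filter]
              exact tail_filter _ hxa1 N
            calc ((tauk k a : ℝ)/(a:ℝ)^2)
                  * ∑ b ∈ Finset.range (N+1),
                      (if x/(a:ℝ) < (b:ℝ) then (1:ℝ)/(b:ℝ)^2 else 0)
                ≤ ((tauk k a : ℝ)/(a:ℝ)^2) * (2 / (x/(a:ℝ))) :=
                  mul_le_mul_of_nonneg_left hin (by positivity)
              _ = (2 / x) * ((tauk k a : ℝ) / (a:ℝ)) := by
                  field_simp
        _ = (2/x) * ∑ a ∈ Finset.Icc 1 ⌊x⌋₊, (tauk k a : ℝ) / (a:ℝ) := by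
            rw [Finset.mul_sum]
        _ ≤ (2/x) * (1 + Real.log x)^k :=
            mul_le_mul_of_nonneg_left (T_bound k x hx) (by positivity)
        _ = 2 * (1 + Real.log x)^k / x := by ring
    have part2 : ∑ p ∈ B.filter (fun p => ¬ (p.1:ℝ) ≤ x), g p
        ≤ 2 * (4^k * (1 + Real.log x)^(k-1) / x) := by
      have hsub2 : B.filter (fun p => ¬ (p.1:ℝ) ≤ x)
          ⊆ ((Finset.range (N+1)).filter (fun a : ℕ => x < (a:ℝ))) ×ˢ Finset.Ioc 0 N := by
        intro p hp
        simp only [Finset.mem_filter, not_le] at hp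
        obtain ⟨h1, h2, h3, h4⟩ := hBmem p hp.1
        simp only [Finset.mem_product, Finset.mem_filter, Finset.mem_range, Finset.mem_Ioc]
        have hpa : p.1 ≤ p.1 * p.2 := Nat.le_mul_of_pos_right _ h2
        have hpb : p.2 ≤ p.1 * p.2 := Nat.le_mul_of_pos_left _ h1
        exact ⟨⟨by omega, hp.2⟩, h2, by omega⟩
      calc ∑ p ∈ B.filter (fun p => ¬ (p.1:ℝ) ≤ x), g p
          ≤ ∑ p ∈ ((Finset.range (N+1)).filter (fun a : ℕ => x < (a:ℝ))) ×ˢ Finset.Ioc 0 N,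
              g p :=
            Finset.sum_le_sum_of_subset_of_nonneg hsub2 (fun p _ _ => hgnonneg p)
        _ = (∑ a ∈ (Finset.range (N+1)).filter (fun a : ℕ => x < (a:ℝ)),
                (tauk k a:ℝ)/(a:ℝ)^2)
              * (∑ b ∈ Finset.Ioc 0 N, (1:ℝ)/(b:ℝ)^2) := by
            rw [Finset.sum_mul_sum, Finset.sum_product]
            refine Finset.sum_congr rfl fun a _ => Finset.sum_congr rfl fun b _ => ?_
            rw [hg]
            simp only
            rw [mul_pow, div_mul_div_comm, mul_one]
        _ ≤ (4^k * (1 + Real.log x)^(k-1) / x) * 2 := by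
            refine mul_le_mul (ih x hx N) (sum_sq_le_two N) ?_ ?_
            · exact Finset.sum_nonneg fun b _ => by positivity
            · positivity
        _ = 2 * (4^k * (1 + Real.log x)^(k-1) / x) := by ring
    have hpow : (1 + Real.log x)^(k-1) ≤ (1 + Real.log x)^k :=
      pow_le_pow_right₀ (by linarith) (Nat.sub_le k 1)
    have h4 : (1:ℝ) ≤ 4^k := one_le_pow₀ (by norm_num : (1:ℝ) ≤ 4)
    have hA : (0:ℝ) ≤ (1 + Real.log x)^k := by positivity
    have hgoal : 2 * (1 + Real.log x) ^ k / x + 2 * (4^k * (1 + Real.log x)^(k-1) / x)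
        ≤ 4 ^ (k+1) * (1 + Real.log x) ^ (k + 1 - 1) / x := by
      simp only [Nat.add_sub_cancel]
      rw [pow_succ]
      have h5 : (4:ℝ)^k * (1 + Real.log x)^(k-1) ≤ 4^k * (1 + Real.log x)^k :=
        mul_le_mul_of_nonneg_left hpow (by positivity)
      have heq : 2 * (1 + Real.log x) ^ k / x + 2 * (4^k * (1 + Real.log x)^(k-1) / x)
          = (2 * (1 + Real.log x) ^ k + 2 * (4^k * (1 + Real.log x)^(k-1))) / x := by ring
      rw [heq]
      gcongr
      nlinarith [h5, mul_nonneg (sub_nonneg.mpr h4) hA]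
    linarith [part1, part2]

theorem stmt_3 :
    ∃ C₂ : ℝ, 1 < C₂ ∧ ∀ k : ℕ, 2 ≤ k → ∀ x : ℝ, 1 ≤ x →
      (∑' d : ℕ, if x < (d : ℝ) then ((moebius d : ℝ)) ^ 2 * (tauk k d : ℝ) / (d : ℝ) ^ 2 else 0)
        ≤ C₂ ^ k * (2 * (k : ℝ) - 2 + Real.log x) ^ (k - 1) / x := by
  refine ⟨4, by norm_num, fun k hk x hx => ?_⟩
  have hx0 : (0:ℝ) < x := by linarith
  have hlog : 0 ≤ Real.log x := Real.log_nonneg hx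
  have hk' : (2:ℝ) ≤ (k:ℝ) := by exact_mod_cast hk
  refine Real.tsum_le_of_sum_range_le (fun d => ?_) (fun n => ?_)
  · split_ifs with h
    · positivity
    · exact le_rfl
  · have hμ : ∀ d : ℕ, ((moebius d : ℝ))^2 ≤ 1 := by
      intro d
      have h : (moebius d)^2 ≤ (1:ℤ) := by
        rw [ArithmeticFunction.moebius_sq]
        split_ifs <;> norm_num
      calc ((moebius d : ℝ))^2 = (((moebius d)^2 : ℤ) : ℝ) := by push_cast; ring
        _ ≤ 1 := by exact_mod_cast h
    calc ∑ d ∈ Finset.range n,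
            (if x < (d:ℝ) then ((moebius d : ℝ))^2 * (tauk k d : ℝ) / (d:ℝ)^2 else 0)
        ≤ ∑ d ∈ Finset.range n,
            (if x < (d:ℝ) then (tauk k d : ℝ) / (d:ℝ)^2 else 0) := by
          refine Finset.sum_le_sum fun d _ => ?_
          split_ifs with h
          · have hd2 : (0:ℝ) < (d:ℝ)^2 := by
              have : (0:ℝ) < (d:ℝ) := lt_of_lt_of_le hx0 (le_of_lt h)
              positivity
            rw [div_le_div_iff₀ hd2 hd2]
            have := mul_le_mul_of_nonneg_right (hμ d) (by positivity : (0:ℝ) ≤ (tauk k d : ℝ))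
            nlinarith [hd2.le, (by positivity : (0:ℝ) ≤ (tauk k d : ℝ))]
          · exact le_rfl
      _ ≤ ∑ d ∈ Finset.range (n+1),
            (if x < (d:ℝ) then (tauk k d : ℝ) / (d:ℝ)^2 else 0) := by
          refine Finset.sum_le_sum_of_subset_of_nonneg
            (Finset.range_subset_range.mpr (by omega)) (fun d _ _ => ?_)
          split_ifs with h
          · positivity
          · exact le_rfl
      _ = ∑ d ∈ (Finset.range (n+1)).filter (fun d : ℕ => x < (d:ℝ)),
            (tauk k d : ℝ) / (d:ℝ)^2 := (Finset.sum_filter _ _).symm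
      _ ≤ 4^k * (1 + Real.log x)^(k-1) / x := main_bound k (by omega) x hx n
      _ ≤ 4^k * (2*(k:ℝ) - 2 + Real.log x)^(k-1) / x := by
          have hbase : (0:ℝ) ≤ 1 + Real.log x := by linarith
          have hle : (1:ℝ) + Real.log x ≤ 2*(k:ℝ) - 2 + Real.log x := by linarith
          have := pow_le_pow_left₀ hbase hle (k-1)
          gcongr
end

section
/- Suppose X, Y ≥ 1 are real numbers, and α is a real number admitting a rational approximation a/q with |α − a/q| < 1/q², gcd(a, q) = 1, q ≥ 1. Then Σ_{n ≤ X} min(XY/n, 1/‖αn‖) ≪ XY (1/q + 1/Y + q/(XY)) log(2Xq), with an absolute implied constant. -/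
/-- Distance from a real number to the nearest integer. -/
noncomputable def nintDist (y : ℝ) : ℝ := |y - round y|

/-- `min (A, 1/‖t‖)`, interpreted as `A` when `‖t‖ = 0` (i.e. `1/‖t‖ = ∞`). -/
noncomputable def minInv (A t : ℝ) : ℝ :=
  if nintDist t = 0 then A else min A (1 / nintDist t)

namespace S9
open Finset

lemma nintDist_nonneg (y : ℝ) : 0 ≤ nintDist y := abs_nonneg _

lemma nintDist_le (y : ℝ) (m : ℤ) : nintDist y ≤ |y - m| := round_le y m

lemma nintDist_int_add (m : ℤ) (y : ℝ) : nintDist (m + y) = nintDist y := by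
  unfold nintDist; rw [add_comm, round_add_intCast]; push_cast; ring_nf

lemma nintDist_ge {y c : ℝ} (h : ∀ M : ℤ, c ≤ |y - M|) : c ≤ nintDist y := h _

lemma nintDist_add_ge (x e : ℝ) : nintDist x - |e| ≤ nintDist (x + e) := by
  apply nintDist_ge
  intro M
  have h3 := abs_add_le (x + e - M) (-e)
  rw [abs_neg] at h3
  have h4 : x + e - M + -e = x - M := by ring
  rw [h4] at h3
  have := nintDist_le x M
  linarith

lemma minInv_le_left (A t : ℝ) : minInv A t ≤ A := by
  unfold minInv; split_ifs
  · exact le_rfl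
  · exact min_le_left _ _

lemma minInv_nonneg {A : ℝ} (t : ℝ) (hA : 0 ≤ A) : 0 ≤ minInv A t := by
  unfold minInv; split_ifs with h
  · exact hA
  · exact le_min hA (div_nonneg zero_le_one (nintDist_nonneg t))

lemma minInv_le_inv {A t c : ℝ} (hc : 0 < c) (h : c ≤ nintDist t) : minInv A t ≤ 1 / c := by
  unfold minInv
  have hne : nintDist t ≠ 0 := by intro h0; rw [h0] at h; linarith
  rw [if_neg hne]
  exact le_trans (min_le_right _ _) (one_div_le_one_div_of_le hc h)

/-- distance index of grid cell `i` (out of `2q`) to nearest of `0, q, 2q` -/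
def g (q i : ℕ) : ℕ := if i < q then min i (q - 1 - i) else min (i - q) (2 * q - 1 - i)

lemma g_lt (q i : ℕ) (hq : 1 ≤ q) (hile : i ≤ 2 * q - 2) : g q i < q := by
  unfold g; split_ifs <;> omega

lemma g_cases {q i v : ℕ} (hq : 1 ≤ q) (hile : i ≤ 2 * q - 2) (hv : g q i = v) :
    i = v ∨ i = q - 1 - v ∨ i = q + v ∨ i = 2 * q - 1 - v := by
  unfold g at hv; split_ifs at hv <;> omega

/-- lower bound on distance from a shifted grid point to any integer -/
lemma grid_lb (q j t : ℕ) (hq : 1 ≤ q) (hj : j < q) (ht : t < q) (b : ℝ)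
    (hb0 : (t : ℝ) / q ≤ b) (hb1 : b < ((t : ℝ) + 1) / q) (M : ℤ) :
    (g q (t + j) : ℝ) / q ≤ |(j : ℝ) / q + b - M| := by
  have hq0 : (0 : ℝ) < q := by exact_mod_cast hq
  set i := t + j with hidef
  have hile : i ≤ 2 * q - 2 := by omega
  set v := g q i with hv
  set y : ℝ := (j : ℝ) + b * q with hy
  have hy1 : (i : ℝ) ≤ y := by
    have : (t : ℝ) ≤ b * q := by rw [div_le_iff₀ hq0] at hb0; linarith
    have hic : (i : ℝ) = (t : ℝ) + j := by exact_mod_cast rfl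
    rw [hy, hic]; linarith
  have hy2 : y < (i : ℝ) + 1 := by
    have : b * q < (t : ℝ) + 1 := by rw [lt_div_iff₀ hq0] at hb1; linarith
    have hic : (i : ℝ) = (t : ℝ) + j := by exact_mod_cast rfl
    rw [hy, hic]; linarith
  have hxy : (j : ℝ) / q + b - M = (y - M * q) / q := by field_simp [hy]; ring
  rw [hxy, abs_div, abs_of_pos hq0, div_le_div_iff_of_pos_right hq0]
  by_cases hiq : i < q
  · have hnat : v ≤ i ∧ v + i + 1 ≤ q := by
      rw [hv]; unfold g; rw [if_pos hiq]; omega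
    have hc1 : (v : ℝ) ≤ i := by exact_mod_cast hnat.1
    have hc2 : (v : ℝ) + i + 1 ≤ q := by exact_mod_cast hnat.2
    rcases le_or_gt M 0 with hM | hM
    · have hMr : (M : ℝ) ≤ 0 := by exact_mod_cast hM
      have : (v : ℝ) ≤ y - M * q := by nlinarith
      exact this.trans (le_abs_self _)
    · have hMr : (1 : ℝ) ≤ M := by exact_mod_cast hM
      have : (v : ℝ) ≤ M * q - y := by nlinarith
      calc (v : ℝ) ≤ M * q - y := this
        _ ≤ |y - M * q| := by rw [abs_sub_comm]; exact le_abs_self _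
  · have hnat : v + q ≤ i ∧ v + i + 1 ≤ 2 * q := by
      rw [hv]; unfold g; rw [if_neg hiq]; omega
    have hc1 : (v : ℝ) + q ≤ i := by exact_mod_cast hnat.1
    have hc2 : (v : ℝ) + i + 1 ≤ 2 * q := by exact_mod_cast hnat.2
    rcases le_or_gt M 1 with hM | hM
    · have hMr : (M : ℝ) ≤ 1 := by exact_mod_cast hM
      have : (v : ℝ) ≤ y - M * q := by nlinarith
      exact this.trans (le_abs_self _)
    · have hMr : (2 : ℝ) ≤ M := by exact_mod_cast hM
      have : (v : ℝ) ≤ M * q - y := by nlinarith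
      calc (v : ℝ) ≤ M * q - y := this
        _ ≤ |y - M * q| := by rw [abs_sub_comm]; exact le_abs_self _

/-- harmonic sum bound -/
lemma harm (m : ℕ) : ∑ v ∈ range m, (if v = 0 then (0:ℝ) else 1 / v) ≤ 1 + Real.log m := by
  have key : ∀ k : ℕ, ∑ v ∈ range (k + 1), (if v = 0 then (0:ℝ) else 1 / v) ≤ 1 + Real.log k := by
    intro k
    induction k with
    | zero => simp [Real.log_zero]
    | succ k ih =>
      rw [Finset.sum_range_succ]
      rcases Nat.eq_zero_or_pos k with hk | hk
      · subst hk; norm_num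
      · have hk0 : (0:ℝ) < k := by exact_mod_cast hk
        have hlog : (1:ℝ) / (k + 1) ≤ Real.log (k + 1) - Real.log k := by
          have h1 : Real.log ((k:ℝ) / (k + 1)) ≤ (k:ℝ) / (k + 1) - 1 :=
            Real.log_le_sub_one_of_pos (by positivity)
          have h2 : Real.log ((k:ℝ) / (k + 1)) = Real.log k - Real.log (k + 1) :=
            Real.log_div (ne_of_gt hk0) (by positivity)
          have h3 : (k:ℝ) / (k + 1) - 1 = -(1 / (k + 1)) := by field_simp; ring
          rw [h2, h3] at h1; linarith
        have hne : k + 1 ≠ 0 := by omega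
        rw [if_neg hne]
        push_cast
        push_cast at hlog
        linarith
  rcases Nat.eq_zero_or_pos m with hm | hm
  · subst hm; simp [Real.log_zero]
  · obtain ⟨k, rfl⟩ : ∃ k, m = k + 1 := ⟨m - 1, by omega⟩
    refine (key k).trans ?_
    have : Real.log k ≤ Real.log (k + 1) := by
      rcases Nat.eq_zero_or_pos k with hk | hk
      · subst hk; simp
      · apply Real.log_le_log (by exact_mod_cast hk); push_cast; linarith
    push_cast
    linarith

/-- sum of a fiber-counted function over a block -/
lemma sum_comp_le (q t : ℕ) (hq : 1 ≤ q) (ht : t < q) (s : Finset ℕ) (I : ℕ → ℕ)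
    (hIt : ∀ n ∈ s, ∃ j < q, I n = t + j) (hinj : Set.InjOn I s)
    (B : ℕ → ℝ) (hB : ∀ v, 0 ≤ B v) :
    ∑ n ∈ s, B (g q (I n)) ≤ ∑ v ∈ range q, 4 * B v := by
  have hIle : ∀ n ∈ s, I n ≤ 2 * q - 2 := by
    intro n hn; obtain ⟨j, hj, hIj⟩ := hIt n hn; omega
  have maps : ∀ n ∈ s, g q (I n) ∈ range q := by
    intro n hn
    exact mem_range.mpr (g_lt q (I n) hq (hIle n hn))
  rw [← Finset.sum_fiberwise_of_maps_to maps]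
  apply Finset.sum_le_sum
  intro v _
  have hcard : (s.filter (fun n => g q (I n) = v)).card ≤ 4 := by
    have hsub : ∀ n ∈ s.filter (fun n => g q (I n) = v),
        I n ∈ ({v, q - 1 - v, q + v, 2 * q - 1 - v} : Finset ℕ) := by
      intro n hn
      rw [mem_filter] at hn
      have := g_cases hq (hIle n hn.1) hn.2
      simp only [mem_insert, mem_singleton]
      tauto
    have hinj' : Set.InjOn I (s.filter (fun n => g q (I n) = v)) :=
      hinj.mono (by intro x hx; exact (mem_filter.mp hx).1)
    refine (Finset.card_le_card_of_injOn I hsub hinj').trans ?_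
    refine (Finset.card_insert_le _ _).trans ?_
    refine Nat.succ_le_succ ?_
    refine (Finset.card_insert_le _ _).trans ?_
    refine Nat.succ_le_succ ?_
    refine (Finset.card_insert_le _ _).trans ?_
    exact Nat.succ_le_succ (by simp)
  calc ∑ n ∈ s.filter (fun n => g q (I n) = v), B (g q (I n))
      = ∑ n ∈ s.filter (fun n => g q (I n) = v), B v := by
        apply Finset.sum_congr rfl
        intro n hn; rw [(mem_filter.mp hn).2]
    _ = (s.filter (fun n => g q (I n) = v)).card * B v := by
        rw [Finset.sum_const, nsmul_eq_mul]
    _ ≤ 4 * B v := by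
        apply mul_le_mul_of_nonneg_right _ (hB v)
        exact_mod_cast hcard

/-- the residue index `j` -/
def J (a : ℤ) (q n : ℕ) : ℕ := (a * n % q).toNat

/-- the block shift index `t` -/
noncomputable def tIdx (α : ℝ) (a : ℤ) (q h : ℕ) : ℕ :=
  (⌊Int.fract ((α - a / q) * (h * q)) * q⌋).toNat

lemma J_lt (a : ℤ) (q n : ℕ) (hq : 1 ≤ q) : J a q n < q := by
  have hq0 : (0 : ℤ) < q := by exact_mod_cast hq
  have := Int.emod_lt_of_pos (a * n) hq0
  unfold J; omega

lemma J_cast (a : ℤ) (q n : ℕ) (hq : 1 ≤ q) : ((a * n % q : ℤ) : ℝ) = (J a q n : ℝ) := by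
  have hq0 : (0 : ℤ) < q := by exact_mod_cast hq
  have h := Int.emod_nonneg (a * (n:ℤ)) (by omega : (q:ℤ) ≠ 0)
  unfold J
  exact_mod_cast (Int.toNat_of_nonneg h).symm

lemma tIdx_lt (α : ℝ) (a : ℤ) (q h : ℕ) (hq : 1 ≤ q) : tIdx α a q h < q := by
  have hq0 : (0 : ℝ) < q := by exact_mod_cast hq
  set b := Int.fract ((α - a / q) * (h * q)) with hb
  have hb0 : 0 ≤ b := Int.fract_nonneg _
  have hb1 : b < 1 := Int.fract_lt_one _
  have h1 : (⌊b * (q:ℝ)⌋ : ℝ) < q := by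
    calc (⌊b * (q:ℝ)⌋ : ℝ) ≤ b * q := Int.floor_le _
      _ < 1 * q := mul_lt_mul_of_pos_right hb1 hq0
      _ = q := by ring
  have h2 : ⌊b * (q:ℝ)⌋ < (q : ℤ) := by exact_mod_cast h1
  unfold tIdx
  rw [← hb]
  omega

lemma res_inj (a : ℤ) (q : ℕ) (hq : 1 ≤ q) (hgcd : Int.gcd a q = 1)
    {m n₁ n₂ : ℕ} (h₁ : n₁ ∈ Icc (m + 1) (m + q)) (h₂ : n₂ ∈ Icc (m + 1) (m + q))
    (he : J a q n₁ = J a q n₂) : n₁ = n₂ := by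
  have hq0 : (0 : ℤ) < q := by exact_mod_cast hq
  have e1 := Int.emod_nonneg (a * (n₁:ℤ)) (by omega : (q:ℤ) ≠ 0)
  have e2 := Int.emod_nonneg (a * (n₂:ℤ)) (by omega : (q:ℤ) ≠ 0)
  have he' : a * (n₁:ℤ) % q = a * (n₂:ℤ) % q := by
    unfold J at he
    rw [← Int.toNat_of_nonneg e1, ← Int.toNat_of_nonneg e2, he]
  have hdvd : (q:ℤ) ∣ a * ((n₂:ℤ) - n₁) := by
    have : (q:ℤ) ∣ a * (n₂:ℤ) - a * (n₁:ℤ) := Int.ModEq.dvd he'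
    convert this using 1; ring
  have hcop : IsCoprime (q:ℤ) a := by
    rw [Int.isCoprime_iff_gcd_eq_one, Int.gcd_comm]
    exact hgcd
  have hdvd2 : (q:ℤ) ∣ ((n₂:ℤ) - n₁) := hcop.dvd_of_dvd_mul_left hdvd
  obtain ⟨c, hc⟩ := hdvd2
  rw [mem_Icc] at h₁ h₂
  have hle : (n₂:ℤ) - n₁ ≤ q - 1 := by
    have g1 := h₁.1; have g2 := h₂.2
    have g1' : (m:ℤ) + 1 ≤ n₁ := by exact_mod_cast g1
    have g2' : (n₂:ℤ) ≤ m + q := by exact_mod_cast g2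
    linarith
  have hge : -((q:ℤ) - 1) ≤ (n₂:ℤ) - n₁ := by
    have g1 := h₂.1; have g2 := h₁.2
    have g1' : (m:ℤ) + 1 ≤ n₂ := by exact_mod_cast g1
    have g2' : (n₁:ℤ) ≤ m + q := by exact_mod_cast g2
    linarith
  have hc0 : c = 0 := by
    by_contra hc0
    rcases lt_or_gt_of_ne hc0 with hcneg | hcpos
    · have : (q:ℤ) * c ≤ -q := by nlinarith
      omega
    · have : (q:ℤ) * c ≥ q := by nlinarith
      omega
  rw [hc0, mul_zero] at hc
  omega

/-- main lower bound on `nintDist (α n)` inside block `h` -/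
lemma nint_lb (a : ℤ) (q h n : ℕ) (hq : 1 ≤ q) (α : ℝ)
    (hδ : |α - a / q| ≤ 1 / (q:ℝ) ^ 2) (hn1 : h * q < n) (hn2 : n ≤ h * q + q) :
    (g q (tIdx α a q h + J a q n) : ℝ) / q - 1 / q ≤ nintDist (α * n) := by
  have hq0 : (0 : ℝ) < q := by exact_mod_cast hq
  set δ : ℝ := α - a / q with hδdef
  have hα : α = a / q + δ := by rw [hδdef]; ring
  set β : ℝ := δ * (h * q) with hβ
  set b : ℝ := Int.fract β with hb
  have hb0 : 0 ≤ b := Int.fract_nonneg β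
  have hb1 : b < 1 := Int.fract_lt_one β
  set t := tIdx α a q h with htdef
  have htn : t = (⌊b * (q:ℝ)⌋).toNat := by
    rw [htdef, hb, hβ, hδdef]; rfl
  have hfl0 : 0 ≤ ⌊b * (q:ℝ)⌋ := Int.floor_nonneg.mpr (by positivity)
  have htc : (t : ℝ) = ⌊b * (q:ℝ)⌋ := by
    rw [htn]; exact_mod_cast congrArg (Int.cast : ℤ → ℝ) (Int.toNat_of_nonneg hfl0)
  have ht1 : (t : ℝ) / q ≤ b := by
    rw [div_le_iff₀ hq0, htc]
    exact Int.floor_le _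
  have ht2 : b < ((t : ℝ) + 1) / q := by
    rw [lt_div_iff₀ hq0]
    have := Int.lt_floor_add_one (b * q)
    rw [htc]; linarith
  have ht : t < q := tIdx_lt α a q h hq
  set j := J a q n with hjdef
  have hj : j < q := J_lt a q n hq
  have hjc : ((a * n % q : ℤ) : ℝ) = (j : ℝ) := J_cast a q n hq
  set m := n - h * q with hm
  have hm1 : 1 ≤ m := by omega
  have hm2 : m ≤ q := by omega
  have hmc : (n : ℝ) = h * q + m := by
    rw [hm]; push_cast [Nat.cast_sub (le_of_lt hn1)]; ring
  have e1 : (a : ℝ) * n = q * ((a * (n:ℤ)) / q : ℤ) + (j : ℝ) := by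
    rw [← hjc]
    exact_mod_cast congrArg (Int.cast : ℤ → ℝ) (Int.mul_ediv_add_emod (a * n) q).symm
  have e2 : β = ⌊β⌋ + b := by rw [hb]; exact (Int.floor_add_fract β).symm
  have e2' : δ * ((h:ℝ) * q) = (⌊β⌋ : ℝ) + b := by rw [← hβ]; exact e2
  have decomp : α * n = (((a * (n:ℤ)) / q + ⌊β⌋ : ℤ) : ℝ) + ((j : ℝ) / q + b + δ * m) := by
    rw [hα]
    push_cast
    have hqq : (q:ℝ) * (q:ℝ)⁻¹ = 1 := mul_inv_cancel₀ (ne_of_gt hq0)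
    linear_combination (1 / (q:ℝ)) * e1 + e2' + δ * hmc + (((a * (n:ℤ)) / q : ℤ) : ℝ) * hqq
  rw [decomp, nintDist_int_add]
  have step1 := nintDist_add_ge ((j : ℝ) / q + b) (δ * m)
  have step2 : (g q (t + j) : ℝ) / q ≤ nintDist ((j : ℝ) / q + b) := by
    apply nintDist_ge
    intro M
    exact grid_lb q j t hq hj ht b ht1 ht2 M
  have step3 : |δ * m| ≤ 1 / q := by
    rw [abs_mul]
    have hmr : |(m : ℝ)| ≤ q := by
      rw [abs_of_nonneg (by positivity)]; exact_mod_cast hm2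
    calc |δ| * |(m : ℝ)| ≤ (1 / q ^ 2) * q := by
          apply mul_le_mul hδ hmr (abs_nonneg _) (by positivity)
      _ = 1 / q := by field_simp
  linarith

/-- the sum over the residues `≥ 2` part of a block: generic tail bound -/
lemma tail_sum_le (q : ℕ) (hq : 1 ≤ q) (A : ℝ) (hA : 0 ≤ A) :
    ∑ v ∈ range q, 4 * (if v ≤ 1 then A else 2 * q / v)
      ≤ 8 * A + 8 * q * (1 + Real.log q) := by
  have hq0 : (0:ℝ) < q := by exact_mod_cast hq
  have hterm : ∀ v ∈ range q, 4 * (if v ≤ 1 then A else 2 * q / v)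
      ≤ (if v ≤ 1 then 4 * A else 0) + 8 * q * (if v = 0 then (0:ℝ) else 1 / v) := by
    intro v _
    by_cases hv : v ≤ 1
    · rw [if_pos hv, if_pos hv]
      rcases Nat.eq_zero_or_pos v with h0 | h0
      · subst h0; simp
      · have hv1 : v = 1 := by omega
        subst hv1
        norm_num
    · rw [if_neg hv, if_neg hv, if_neg (by omega : v ≠ 0)]
      have : (4:ℝ) * (2 * q / v) = 8 * q * (1 / v) := by
        field_simp; ring
      rw [this]
      linarith
  refine (Finset.sum_le_sum hterm).trans ?_
  rw [Finset.sum_add_distrib]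
  have hpart1 : ∑ v ∈ range q, (if v ≤ 1 then 4 * A else (0:ℝ)) ≤ 8 * A := by
    rw [← Finset.sum_filter]
    have hsub : (range q).filter (fun v => v ≤ 1) ⊆ range 2 := by
      intro v hv; rw [mem_filter] at hv; rw [mem_range]; omega
    have hcard : ((range q).filter (fun v => v ≤ 1)).card ≤ 2 := by
      refine (Finset.card_le_card hsub).trans ?_
      simp
    rw [Finset.sum_const, nsmul_eq_mul]
    calc (((range q).filter (fun v => v ≤ 1)).card : ℝ) * (4 * A)
        ≤ 2 * (4 * A) := by
          apply mul_le_mul_of_nonneg_right _ (by linarith)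
          exact_mod_cast hcard
      _ = 8 * A := by ring
  have hpart2 : ∑ v ∈ range q, 8 * (q:ℝ) * (if v = 0 then (0:ℝ) else 1 / v)
      ≤ 8 * q * (1 + Real.log q) := by
    rw [← Finset.mul_sum]
    apply mul_le_mul_of_nonneg_left (harm q) (by positivity)
  linarith

/-- block bound for blocks `h ≥ 1` -/
lemma block_pos (a : ℤ) (q h : ℕ) (hq : 1 ≤ q) (hh : 1 ≤ h) (hgcd : Int.gcd a q = 1)
    (α : ℝ) (hδ : |α - a / q| ≤ 1 / (q:ℝ) ^ 2) (U : ℝ) (hU : 0 ≤ U) :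
    ∑ n ∈ Icc (h * q + 1) (h * q + q), minInv (U / n) (α * n)
      ≤ 8 * (U / (h * q)) + 8 * q * (1 + Real.log q) := by
  have hq0 : (0:ℝ) < q := by exact_mod_cast hq
  have hh0 : (0:ℝ) < h := by exact_mod_cast hh
  set t := tIdx α a q h with htdef
  set A : ℝ := U / (h * q) with hA
  have hA0 : 0 ≤ A := by positivity
  set B : ℕ → ℝ := fun v => if v ≤ 1 then A else 2 * q / v with hB
  have hB0 : ∀ v, 0 ≤ B v := by
    intro v; rw [hB]; dsimp only; split_ifs
    · exact hA0
    · positivity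
  have hstep1 : ∀ n ∈ Icc (h * q + 1) (h * q + q),
      minInv (U / n) (α * n) ≤ B (g q (t + J a q n)) := by
    intro n hn
    rw [mem_Icc] at hn
    have hn1 : h * q < n := by omega
    have hn2 : n ≤ h * q + q := hn.2
    have hn0 : (0:ℝ) < n := by
      have : 1 ≤ n := by omega
      exact_mod_cast this
    set w := g q (t + J a q n) with hw
    by_cases hgv : w ≤ 1
    · rw [hB]; dsimp only; rw [if_pos hgv]
      refine (minInv_le_left _ _).trans ?_
      rw [hA, div_le_div_iff₀ hn0 (by positivity)]
      have hcast : (h:ℝ) * q ≤ n := by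
        have : h * q ≤ n := le_of_lt hn1
        exact_mod_cast this
      nlinarith
    · push_neg at hgv
      have hgv2 : (2:ℝ) ≤ w := by exact_mod_cast hgv
      have hlb := nint_lb a q h n hq α hδ hn1 hn2
      rw [← hw] at hlb
      have hc0 : (0:ℝ) < (w:ℝ) / (2 * q) := by positivity
      have hc1 : (w:ℝ) / (2 * q) ≤ nintDist (α * n) := by
        have : (w:ℝ) / (2 * q) ≤ (w:ℝ) / q - 1 / q := by
          rw [div_sub_div_same, div_le_div_iff₀ (by positivity) hq0]
          nlinarith
        linarith
      refine (minInv_le_inv hc0 hc1).trans ?_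
      rw [one_div_div, hB]; dsimp only
      rw [if_neg (by omega)]
  refine (Finset.sum_le_sum hstep1).trans ?_
  have hIt : ∀ n ∈ Icc (h * q + 1) (h * q + q), ∃ j < q, t + J a q n = t + j :=
    fun n _ => ⟨J a q n, J_lt a q n hq, rfl⟩
  have hinj : Set.InjOn (fun n => t + J a q n) (Icc (h * q + 1) (h * q + q)) := by
    intro n₁ hn₁ n₂ hn₂ he
    simp only at he
    exact res_inj a q hq hgcd (by simpa using hn₁) (by simpa using hn₂) (by omega)
  refine (sum_comp_le q t hq (tIdx_lt α a q h hq) _ _ hIt hinj B hB0).trans ?_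
  have := tail_sum_le q hq A hA0
  rw [hB]
  exact this


/-- lower bound via residue only (used in block 0) -/
lemma nint_lb0 (a : ℤ) (q n : ℕ) (hq : 1 ≤ q) (α : ℝ) :
    nintDist ((J a q n : ℝ) / q) - |α - a / q| * n ≤ nintDist (α * n) := by
  have hq0 : (0:ℝ) < q := by exact_mod_cast hq
  set δ : ℝ := α - a / q with hδdef
  have hα : α = a / q + δ := by rw [hδdef]; ring
  set j := J a q n with hjdef
  have hjc : ((a * n % q : ℤ) : ℝ) = (j : ℝ) := J_cast a q n hq
  have e1 : (a : ℝ) * n = q * ((a * (n:ℤ)) / q : ℤ) + (j : ℝ) := by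
    rw [← hjc]
    exact_mod_cast congrArg (Int.cast : ℤ → ℝ) (Int.mul_ediv_add_emod (a * n) q).symm
  have decomp : α * n = (((a * (n:ℤ)) / q : ℤ) : ℝ) + ((j : ℝ) / q + δ * n) := by
    rw [hα]
    push_cast
    have hqq : (q:ℝ) * (q:ℝ)⁻¹ = 1 := mul_inv_cancel₀ (ne_of_gt hq0)
    linear_combination (1 / (q:ℝ)) * e1 + (((a * (n:ℤ)) / q : ℤ) : ℝ) * hqq
  rw [decomp, nintDist_int_add]
  have step1 := nintDist_add_ge ((j : ℝ) / q) (δ * n)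
  have habs : |δ * n| = |δ| * n := by
    rw [abs_mul, abs_of_nonneg (by positivity : (0:ℝ) ≤ (n:ℝ))]
  rw [habs] at step1
  exact step1

/-- distance of `j/q` to integers -/
lemma njq_lb (q j : ℕ) (hq : 1 ≤ q) (hj : j < q) :
    ((min j (q - j) : ℕ) : ℝ) / q ≤ nintDist ((j : ℝ) / q) := by
  have hq0 : (0:ℝ) < q := by exact_mod_cast hq
  apply nintDist_ge
  intro M
  have hxy : (j : ℝ) / q - M = ((j:ℝ) - M * q) / q := by field_simp
  rw [hxy, abs_div, abs_of_pos hq0, div_le_div_iff_of_pos_right hq0]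
  have hj1 : (j:ℝ) < q := by exact_mod_cast hj
  have hm1 : ((min j (q - j) : ℕ) : ℝ) ≤ j := by exact_mod_cast Nat.min_le_left _ _
  have hm2 : ((min j (q - j) : ℕ) : ℝ) ≤ (q:ℝ) - j := by
    have h1 : (min j (q - j) : ℕ) ≤ q - j := Nat.min_le_right _ _
    have h2 : ((q - j : ℕ) : ℝ) = (q:ℝ) - j := by
      push_cast [Nat.cast_sub (le_of_lt hj)]; ring
    calc ((min j (q - j) : ℕ) : ℝ) ≤ ((q - j : ℕ) : ℝ) := by exact_mod_cast h1
      _ = (q:ℝ) - j := h2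
  rcases le_or_gt M 0 with hM | hM
  · have hMr : (M : ℝ) ≤ 0 := by exact_mod_cast hM
    have hres : ((min j (q - j) : ℕ) : ℝ) ≤ (j:ℝ) - M * q := by nlinarith
    exact hres.trans (le_abs_self _)
  · have hMr : (1 : ℝ) ≤ M := by exact_mod_cast hM
    have hres : ((min j (q - j) : ℕ) : ℝ) ≤ M * q - j := by nlinarith
    calc ((min j (q - j) : ℕ) : ℝ) ≤ M * q - j := hres
      _ ≤ |(j:ℝ) - M * q| := by rw [abs_sub_comm]; exact le_abs_self _

lemma tIdx_zero (α : ℝ) (a : ℤ) (q : ℕ) : tIdx α a q 0 = 0 := by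
  unfold tIdx
  norm_num

/-- block bound for the initial block -/
lemma block_zero (a : ℤ) (q : ℕ) (hq : 1 ≤ q) (hgcd : Int.gcd a q = 1)
    (α : ℝ) (hδ : |α - a / q| ≤ 1 / (q:ℝ) ^ 2) (U : ℝ) (hU : 0 ≤ U) :
    ∑ n ∈ Icc 1 q, minInv (U / n) (α * n)
      ≤ 8 * q + 12 * (U / q) + 8 * q * (1 + Real.log q) := by
  have hq0 : (0:ℝ) < q := by exact_mod_cast hq
  have hcop : IsCoprime (q:ℤ) a := by
    rw [Int.isCoprime_iff_gcd_eq_one, Int.gcd_comm]; exact hgcd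
  rw [← Finset.sum_filter_add_sum_filter_not (Icc 1 q) (fun n => g q (J a q n) ≤ 1)]
  have hpartE : ∑ n ∈ (Icc 1 q).filter (fun n => g q (J a q n) ≤ 1), minInv (U / n) (α * n)
      ≤ 4 * (2 * q + 3 * (U / q)) := by
    have hbd : ∀ n ∈ (Icc 1 q).filter (fun n => g q (J a q n) ≤ 1),
        minInv (U / n) (α * n) ≤ 2 * q + 3 * (U / q) := by
      intro n hn
      rw [mem_filter, mem_Icc] at hn
      obtain ⟨⟨hn1, hn2⟩, hg⟩ := hn
      have hn0 : (0:ℝ) < n := by exact_mod_cast hn1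
      set j := J a q n with hjdef
      have hj : j < q := J_lt a q n hq
      by_cases hj0 : j = 0
      · -- n = q
        have hmod0 : a * (n:ℤ) % q = 0 := by
          have hnn := Int.emod_nonneg (a * (n:ℤ)) (by exact_mod_cast Nat.one_le_iff_ne_zero.mp hq : (q:ℤ) ≠ 0)
          unfold J at hjdef
          omega
        have hdvd : (q:ℤ) ∣ a * n := Int.dvd_of_emod_eq_zero hmod0
        have hdvd2 : (q:ℤ) ∣ (n:ℤ) := hcop.dvd_of_dvd_mul_left hdvd
        have hdvd3 : q ∣ n := by exact_mod_cast hdvd2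
        have hnq : n = q := le_antisymm hn2 (Nat.le_of_dvd (by omega) hdvd3)
        refine (minInv_le_left _ _).trans ?_
        rw [hnq]
        have h1 : 0 ≤ U / (q:ℝ) := by positivity
        linarith
      · have hmin1 : 1 ≤ min j (q - j) := by omega
        have hlb0 := nint_lb0 a q n hq α
        have hnjq := njq_lb q j hq hj
        have hminr : (1:ℝ) ≤ ((min j (q - j) : ℕ) : ℝ) := by exact_mod_cast hmin1
        by_cases hsm : 2 * n ≤ q
        · -- small n : nintDist ≥ 1/(2q)
          have hnr : (n:ℝ) ≤ q / 2 := by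
            have : (2*n : ℕ) ≤ (q:ℕ) := hsm
            have h2 : ((2*n : ℕ) : ℝ) ≤ q := by exact_mod_cast this
            push_cast at h2; linarith
          have hdb : |α - a / q| * n ≤ 1 / (2 * q) := by
            calc |α - a / q| * n ≤ (1 / q^2) * (q / 2) := by
                  apply mul_le_mul hδ hnr (by positivity) (by positivity)
              _ = 1 / (2 * q) := by field_simp
          have hnd : 1 / (2 * q) ≤ nintDist (α * n) := by
            have e : (1:ℝ)/q - 1/(2*q) = 1/(2*q) := by field_simp; ring
            have hmq : (1:ℝ)/q ≤ ((min j (q - j) : ℕ) : ℝ)/q := by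
              rw [div_le_div_iff₀ hq0 hq0]; nlinarith
            linarith [hlb0, hnjq, hdb]
          refine (minInv_le_inv (by positivity) hnd).trans ?_
          rw [one_div_one_div]
          have : 0 ≤ U / (q:ℝ) := by positivity
          linarith
        · -- large n : U/n ≤ 2U/q
          refine (minInv_le_left _ _).trans ?_
          have h2n : (q:ℝ) < 2 * n := by
            have : q < 2*n := by omega
            exact_mod_cast this
          have hstep : U / (n:ℝ) ≤ 2 * U / q := by
            rw [div_le_div_iff₀ hn0 hq0]
            nlinarith [hU, h2n]
          have h2q : 0 ≤ 2 * (q:ℝ) := by positivity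
          have hUq : 0 ≤ U / (q:ℝ) := by positivity
          have he : 2 * U / (q:ℝ) = 2 * (U / q) := by ring
          rw [he] at hstep
          linarith
    refine (Finset.sum_le_card_nsmul _ _ _ hbd).trans ?_
    rw [nsmul_eq_mul]
    have hcard : ((Icc 1 q).filter (fun n => g q (J a q n) ≤ 1)).card ≤ 4 := by
      have hsub : ∀ n ∈ (Icc 1 q).filter (fun n => g q (J a q n) ≤ 1),
          J a q n ∈ ({0, 1, q - 2, q - 1} : Finset ℕ) := by
        intro n hn
        rw [mem_filter] at hn
        have hj : J a q n < q := J_lt a q n hq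
        have hg := hn.2
        unfold g at hg
        rw [if_pos hj] at hg
        simp only [mem_insert, mem_singleton]
        omega
      have hinj : Set.InjOn (J a q) ((Icc 1 q).filter (fun n => g q (J a q n) ≤ 1)) := by
        intro n₁ hn₁ n₂ hn₂ he
        have m₁ : n₁ ∈ Icc (0 + 1) (0 + q) := by
          simpa using (mem_filter.mp hn₁).1
        have m₂ : n₂ ∈ Icc (0 + 1) (0 + q) := by
          simpa using (mem_filter.mp hn₂).1
        exact res_inj a q hq hgcd m₁ m₂ he
      refine (Finset.card_le_card_of_injOn (J a q) hsub hinj).trans ?_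
      refine (Finset.card_insert_le _ _).trans ?_
      refine Nat.succ_le_succ ?_
      refine (Finset.card_insert_le _ _).trans ?_
      refine Nat.succ_le_succ ?_
      refine (Finset.card_insert_le _ _).trans ?_
      exact Nat.succ_le_succ (by simp)
    have hbnd0 : (0:ℝ) ≤ 2 * q + 3 * (U / q) := by positivity
    exact mul_le_mul_of_nonneg_right (by exact_mod_cast hcard) hbnd0
  have hpartM : ∑ n ∈ (Icc 1 q).filter (fun n => ¬ g q (J a q n) ≤ 1), minInv (U / n) (α * n)
      ≤ 8 * 0 + 8 * q * (1 + Real.log q) := by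
    set B : ℕ → ℝ := fun v => if v ≤ 1 then 0 else 2 * q / v with hB
    have hB0 : ∀ v, 0 ≤ B v := by
      intro v; rw [hB]; dsimp only; split_ifs
      · exact le_rfl
      · positivity
    have hstep : ∀ n ∈ (Icc 1 q).filter (fun n => ¬ g q (J a q n) ≤ 1),
        minInv (U / n) (α * n) ≤ B (g q (J a q n)) := by
      intro n hn
      rw [mem_filter, mem_Icc] at hn
      obtain ⟨⟨hn1, hn2⟩, hg⟩ := hn
      push_neg at hg
      set w := g q (J a q n) with hw
      have hgv2 : (2:ℝ) ≤ w := by exact_mod_cast hg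
      have hlb := nint_lb a q 0 n hq α hδ (by omega) (by omega)
      rw [tIdx_zero, zero_add, ← hw] at hlb
      have hc1 : (w:ℝ) / (2 * q) ≤ nintDist (α * n) := by
        have : (w:ℝ) / (2 * q) ≤ (w:ℝ) / q - 1 / q := by
          rw [div_sub_div_same, div_le_div_iff₀ (by positivity) hq0]
          nlinarith
        linarith
      refine (minInv_le_inv (by positivity) hc1).trans ?_
      rw [one_div_div, hB]; dsimp only
      rw [if_neg (by omega)]
    refine (Finset.sum_le_sum hstep).trans ?_
    have hsub := Finset.filter_subset (fun n => ¬ g q (J a q n) ≤ 1) (Icc 1 q)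
    refine (Finset.sum_le_sum_of_subset_of_nonneg hsub
      (fun n _ _ => hB0 (g q (J a q n)))).trans ?_
    have hIt : ∀ n ∈ Icc 1 q, ∃ j < q, J a q n = 0 + j :=
      fun n _ => ⟨J a q n, J_lt a q n hq, (zero_add _).symm⟩
    have hinj : Set.InjOn (J a q) (Icc 1 q) := by
      intro n₁ hn₁ n₂ hn₂ he
      exact res_inj a q hq hgcd (m := 0) (by simpa using hn₁) (by simpa using hn₂) he
    refine (sum_comp_le q 0 hq (by omega) _ _ hIt hinj B hB0).trans ?_
    have := tail_sum_le q hq 0 le_rfl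
    rw [hB]
    exact this
  have hfin : 4 * (2 * (q:ℝ) + 3 * (U / q)) + (8 * 0 + 8 * q * (1 + Real.log q))
      = 8 * q + 12 * (U / q) + 8 * q * (1 + Real.log q) := by ring
  linarith [hpartE, hpartM]

end S9

set_option maxHeartbeats 1000000 in
open S9 Finset in
theorem stmt_9 :
    ∃ C : ℝ, 0 < C ∧ ∀ (X Y α : ℝ) (a : ℤ) (q : ℕ), 1 ≤ X → 1 ≤ Y → 1 ≤ q →
      Int.gcd a q = 1 → |α - (a : ℝ) / q| < 1 / (q : ℝ) ^ 2 →
      ∑ n ∈ Finset.Icc 1 ⌊X⌋₊, minInv (X * Y / (n : ℝ)) (α * n)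
        ≤ C * (X * Y * (1 / (q : ℝ) + 1 / Y + (q : ℝ) / (X * Y)) * Real.log (2 * X * q)) := by
  refine ⟨1000, by norm_num, ?_⟩
  intro X Y α a q hX hY hq hgcd happ
  have hq0 : (0:ℝ) < q := by exact_mod_cast hq
  have hX0 : (0:ℝ) < X := by linarith
  have hY0 : (0:ℝ) < Y := by linarith
  have hδ : |α - a / q| ≤ 1 / (q:ℝ) ^ 2 := le_of_lt happ
  have hU : (0:ℝ) ≤ X * Y := by positivity
  set N := ⌊X⌋₊ with hN
  have hN1 : 1 ≤ N := by
    rw [hN]; exact Nat.le_floor (by exact_mod_cast hX)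
  have hNX : (N:ℝ) ≤ X := by rw [hN]; exact Nat.floor_le (by linarith)
  set H := (N - 1) / q + 1 with hH
  have hmaps : ∀ n ∈ Icc 1 N, (n - 1) / q ∈ range H := by
    intro n hn; rw [mem_Icc] at hn; rw [mem_range, hH]
    have := Nat.div_le_div_right (c := q) (show n - 1 ≤ N - 1 by omega)
    omega
  clear_value N H
  rw [← Finset.sum_fiberwise_of_maps_to hmaps (fun n => minInv (X * Y / (n:ℝ)) (α * n))]
  have hfib : ∀ h ∈ range H,
      (∑ n ∈ (Icc 1 N).filter (fun n => (n - 1) / q = h), minInv (X * Y / (n:ℝ)) (α * n))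
      ≤ (if h = 0 then 8 * (q:ℝ) + 12 * (X * Y / q) + 8 * q * (1 + Real.log q)
          else 8 * (X * Y / (h * q)) + 8 * q * (1 + Real.log q)) := by
    intro h _
    have hsub : (Icc 1 N).filter (fun n => (n - 1) / q = h) ⊆ Icc (h * q + 1) (h * q + q) := by
      intro n hn
      rw [mem_filter, mem_Icc] at hn
      rw [mem_Icc]
      obtain ⟨⟨hn1, hn2⟩, hn3⟩ := hn
      have e1 : h * q ≤ n - 1 := by rw [← hn3]; exact Nat.div_mul_le_self _ _
      have e2 : n - 1 < (h + 1) * q := by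
        apply (Nat.div_lt_iff_lt_mul (show 0 < q by omega)).mp
        rw [hn3]; omega
      have e3 : (h + 1) * q = h * q + q := by ring
      rw [e3] at e2
      omega
    have hnonneg : ∀ n ∈ Icc (h * q + 1) (h * q + q),
        n ∉ (Icc 1 N).filter (fun n => (n - 1) / q = h) →
        0 ≤ minInv (X * Y / (n:ℝ)) (α * n) :=
      fun n _ _ => minInv_nonneg _ (by positivity)
    refine (Finset.sum_le_sum_of_subset_of_nonneg hsub hnonneg).trans ?_
    rcases eq_or_ne h 0 with h0 | h0
    · subst h0
      rw [if_pos rfl]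
      have hIcc : Icc (0 * q + 1) (0 * q + q) = Icc 1 q := by norm_num
      rw [hIcc]
      exact block_zero a q hq hgcd α hδ (X * Y) hU
    · rw [if_neg h0]
      exact block_pos a q h hq (by omega) hgcd α hδ (X * Y) hU
  refine (Finset.sum_le_sum hfib).trans ?_
  -- notation
  set L := Real.log (2 * X * q) with hL
  have hq1 : (1:ℝ) ≤ q := by exact_mod_cast hq
  have hXq1 : (1:ℝ) ≤ X * q := by nlinarith
  have hlog2 : Real.log 2 ≤ L := by
    rw [hL]; exact Real.log_le_log (by norm_num) (by nlinarith)
  have h2L : 1 ≤ 2 * L := by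
    have := Real.log_two_gt_d9; linarith
  have hL0 : 0 ≤ L := by
    have := Real.log_two_gt_d9; linarith
  have hLq : Real.log q ≤ L := by
    rw [hL]
    apply Real.log_le_log hq0
    nlinarith [mul_le_mul_of_nonneg_left (show (1:ℝ) ≤ 2 * X by linarith) (le_of_lt hq0)]
  have hlogq0 : 0 ≤ Real.log q := Real.log_nonneg (by exact_mod_cast hq)
  have hHpos : 0 < H := by rw [hH]; exact Nat.succ_pos _
  have hHN : H ≤ N := by
    rw [hH]
    have h1 : (N - 1) / q ≤ N - 1 := Nat.div_le_self _ _
    have h2 : N - 1 < N := Nat.sub_lt (by omega) Nat.one_pos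
    exact Nat.succ_le_of_lt (Nat.lt_of_le_of_lt h1 h2)
  have hHle : (H:ℝ) ≤ X := le_trans (by exact_mod_cast hHN) hNX
  have hLH : Real.log H ≤ L := by
    rw [hL]
    apply Real.log_le_log (by exact_mod_cast hHpos)
    nlinarith [mul_nonneg (mul_nonneg (le_of_lt hX0) (le_of_lt hq0)) (le_of_lt hX0)]
  -- split off h = 0
  rw [Finset.range_eq_Ico, Finset.sum_eq_sum_Ico_succ_bot hHpos]
  rw [if_pos rfl]
  have htail : ∑ h ∈ Ico 1 H,
      (if h = 0 then 8 * (q:ℝ) + 12 * (X * Y / q) + 8 * q * (1 + Real.log q)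
        else 8 * (X * Y / (h * q)) + 8 * q * (1 + Real.log q))
      ≤ 8 * (X * Y / q) * (1 + Real.log H) + 8 * X * (1 + Real.log q) := by
    have hcong : ∀ h ∈ Ico 1 H,
        (if h = 0 then 8 * (q:ℝ) + 12 * (X * Y / q) + 8 * q * (1 + Real.log q)
          else 8 * (X * Y / (h * q)) + 8 * q * (1 + Real.log q))
        = 8 * (X * Y / q) * (if h = 0 then (0:ℝ) else 1 / h) + 8 * q * (1 + Real.log q) := by
      intro h hh
      rw [mem_Ico] at hh
      have hh0 : h ≠ 0 := by omega
      rw [if_neg hh0, if_neg hh0]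
      have hhr : ((h:ℝ)) ≠ 0 := by
        have : (0:ℝ) < h := by exact_mod_cast hh.1
        linarith
      field_simp
    rw [Finset.sum_congr rfl hcong, Finset.sum_add_distrib, ← Finset.mul_sum,
      Finset.sum_const, Nat.card_Ico, nsmul_eq_mul]
    have hp1 : ∑ h ∈ Ico 1 H, (if h = 0 then (0:ℝ) else 1 / h) ≤ 1 + Real.log H := by
      refine le_trans (Finset.sum_le_sum_of_subset_of_nonneg ?_ ?_) (harm H)
      · rw [Finset.range_eq_Ico]
        exact Finset.Ico_subset_Ico (by omega) le_rfl
      · intro i _ _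
        split_ifs
        · exact le_rfl
        · positivity
    have hp2 : ((H - 1 : ℕ):ℝ) * (8 * q * (1 + Real.log q)) ≤ 8 * X * (1 + Real.log q) := by
      have hmq : ((H - 1 : ℕ):ℝ) * q ≤ X := by
        have h1 : (H - 1) * q ≤ N := by
          have h2 : H - 1 = (N - 1) / q := by rw [hH]; exact Nat.succ_sub_one _
          rw [h2]
          have h3 := Nat.div_mul_le_self (N - 1) q
          omega
        have h2 : (((H - 1) * q : ℕ):ℝ) ≤ (N:ℝ) := by exact_mod_cast h1
        push_cast at h2
        linarith
      have h3 : (0:ℝ) ≤ 1 + Real.log q := by linarith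
      nlinarith [mul_le_mul_of_nonneg_right hmq h3]
    have hXYq : (0:ℝ) ≤ 8 * (X * Y / q) := by positivity
    have := mul_le_mul_of_nonneg_left hp1 hXYq
    linarith
  refine (add_le_add_right htail _).trans ?_
  -- final numeric assembly
  have hexp : X * Y * (1 / q + 1 / Y + (q:ℝ) / (X * Y)) = X * Y / q + X + q := by
    have hYne : Y ≠ 0 := ne_of_gt hY0
    have hXYne : X * Y ≠ 0 := by positivity
    have hqne : (q:ℝ) ≠ 0 := ne_of_gt hq0
    field_simp
  rw [hexp]
  have e1 : 1 + Real.log q ≤ 3 * L := by linarith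
  have e2 : 1 + Real.log H ≤ 3 * L := by linarith
  have hqL : (0:ℝ) ≤ q := le_of_lt hq0
  have hXYq0 : (0:ℝ) ≤ X * Y / q := by positivity
  have t1 : 8 * (q:ℝ) ≤ 16 * ((q:ℝ) * L) := by nlinarith
  have t2 : 12 * (X * Y / q) ≤ 24 * ((X * Y / q) * L) := by nlinarith
  have t3 : 8 * (q:ℝ) * (1 + Real.log q) ≤ 24 * ((q:ℝ) * L) := by nlinarith
  have t4 : 8 * (X * Y / q) * (1 + Real.log H) ≤ 24 * ((X * Y / q) * L) := by nlinarith
  have t5 : 8 * X * (1 + Real.log q) ≤ 24 * (X * L) := by nlinarith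
  have hRHS : 1000 * ((X * Y / q + X + q) * L)
      = 1000 * ((X * Y / q) * L) + 1000 * (X * L) + 1000 * ((q:ℝ) * L) := by ring
  have hq' : (0:ℝ) ≤ (q:ℝ) * L := mul_nonneg hqL hL0
  have hX' : (0:ℝ) ≤ X * L := mul_nonneg (le_of_lt hX0) hL0
  have hXY' : (0:ℝ) ≤ (X * Y / q) * L := mul_nonneg hXYq0 hL0
  rw [hRHS]
  linarith
end
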